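/- Let p > 2 and let F be harmonic on the upper half-plane H with ∫_H |∇F(z)|^p y^{p-2} dm(z) = ‖F‖^p < ∞. Then for every bounded interval I ⊂ ℝ with Carleson box Q_I = I × (0,|I|), one has ∫_{Q_I} |∇F(z)|² y dm(z) ≤ C ‖F‖² |I| for a constant C depending only on p. -/

import Mathlib

open MeasureTheory Complex Filter Set Metric
open scoped ENNReal Real Topology

noncomputable section

/-- The upper half plane in `ℂ`. -/
def UHP : Set ℂ := {z : ℂ | 0 < z.im}

/-- `F` is harmonic on `s`: it is `C²` and its Laplacian vanishes on `s`. -/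
def IsHarmonicOn (F : ℂ → ℝ) (s : Set ℂ) : Prop :=
  ContDiffOn ℝ 2 F s ∧ ∀ z ∈ s,
    iteratedFDeriv ℝ 2 F z ![1, 1] + iteratedFDeriv ℝ 2 F z ![Complex.I, Complex.I] = 0

/-- The first-order Besov energy `I_p^1(F, ℍ) = ∫_ℍ |∇F|^p y^(p-2) dm`. -/
def besovEnergy (p : ℝ) (F : ℂ → ℝ) : ℝ≥0∞ :=
  ∫⁻ z in UHP, ENNReal.ofReal (‖fderiv ℝ F z‖ ^ p * z.im ^ (p - 2))

/-- The Carleson box over the interval `(a, b)`. -/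
def carlesonBox (a b : ℝ) : Set ℂ :=
  {z : ℂ | z.re ∈ Set.Ioo a b ∧ z.im ∈ Set.Ioo 0 (b - a)}

/-- Lebesgue integral of a power on `Ioo 0 L`. -/
lemma lintegral_Ioo_rpow {L α : ℝ} (hL : 0 < L) (hα : -1 < α) :
    ∫⁻ y in Ioo 0 L, ENNReal.ofReal (y ^ α) = ENNReal.ofReal (L ^ (α + 1) / (α + 1)) := by
  have hα1 : 0 < α + 1 := by linarith
  have hint : IntegrableOn (fun y : ℝ => y ^ α) (Ioo 0 L) := by
    have := (intervalIntegral.intervalIntegrable_rpow' (a := 0) (b := L) hα)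
    rw [intervalIntegrable_iff_integrableOn_Ioc_of_le hL.le] at this
    exact this.mono_set Ioo_subset_Ioc_self
  rw [← ofReal_integral_eq_lintegral_ofReal hint
      ((ae_restrict_iff' measurableSet_Ioo).2 (ae_of_all _ fun y hy => Real.rpow_nonneg hy.1.le α))]
  congr 1
  rw [← integral_Ioc_eq_integral_Ioo, ← intervalIntegral.integral_of_le hL.le,
    integral_rpow (Or.inl hα), Real.zero_rpow hα1.ne', sub_zero]

/-- Integral over a Carleson box of a function of the imaginary part. -/
lemma lintegral_carlesonBox_im (a b : ℝ) (h : ℝ → ℝ≥0∞) (hm : Measurable h) :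
    ∫⁻ z in carlesonBox a b, h z.im = ENNReal.ofReal (b - a) * ∫⁻ y in Ioo 0 (b - a), h y := by
  have hemb := Complex.measurableEquivRealProd.measurableEmbedding
  have key := Complex.volume_preserving_equiv_real_prod.setLIntegral_comp_emb hemb
      (fun x : ℝ × ℝ => h x.2) (carlesonBox a b)
  have himg : Complex.measurableEquivRealProd '' carlesonBox a b = Ioo a b ×ˢ Ioo 0 (b - a) := by
    rw [MeasurableEquiv.image_eq_preimage_symm]
    ext x
    simp [carlesonBox, Complex.measurableEquivRealProd, Complex.equivRealProd, Set.mem_prod]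
  rw [himg] at key
  calc ∫⁻ z in carlesonBox a b, h z.im
      = ∫⁻ x in Ioo a b ×ˢ Ioo 0 (b - a), h x.2 := key
    _ = ENNReal.ofReal (b - a) * ∫⁻ y in Ioo 0 (b - a), h y := by
        rw [Measure.volume_eq_prod, ← Measure.prod_restrict,
          lintegral_prod (fun x => h x.2) (hm.comp measurable_snd).aemeasurable]
        simp [lintegral_const, Real.volume_Ioo, mul_comm]

/-- For `p > 2` and `F` harmonic on the upper half-plane with finite Besov energy
`‖F‖^p = ∫_ℍ |∇F|^p y^(p-2) dm < ∞`, the measure `|∇F|² y dm` satisfies the Carleson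
box estimate `∫_{Q_I} |∇F|² y dm ≤ C ‖F‖² |I|`, with `C` depending only on `p`. -/
theorem statement0 (p : ℝ) (hp : 2 < p) :
    ∃ C : ℝ≥0∞, 0 < C ∧ C < ⊤ ∧
      ∀ F : ℂ → ℝ, IsHarmonicOn F UHP → besovEnergy p F < ⊤ →
        ∀ a b : ℝ, a < b →
          (∫⁻ z in carlesonBox a b, ENNReal.ofReal (‖fderiv ℝ F z‖ ^ 2 * z.im)) ≤
            C * besovEnergy p F ^ (2 / p) * ENNReal.ofReal (b - a) := by
  have hp0 : (0 : ℝ) < p := by linarith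
  have hp2 : (0 : ℝ) < p - 2 := by linarith
  set C : ℝ≥0∞ := ENNReal.ofReal ((p - 2) / 2) ^ ((p - 2) / p) with hCdef
  refine ⟨C, ENNReal.rpow_pos (ENNReal.ofReal_pos.2 (by positivity)) ENNReal.ofReal_ne_top,
    ENNReal.rpow_lt_top_of_nonneg (by positivity) ENNReal.ofReal_ne_top, ?_⟩
  intro F _ _ a b hab
  have hL : 0 < b - a := by linarith
  set Q := carlesonBox a b with hQdef
  have hQm : MeasurableSet Q :=
    (measurableSet_Ioo.preimage Complex.measurable_re).inter
      (measurableSet_Ioo.preimage Complex.measurable_im)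
  have hgm : Measurable fun z => ‖fderiv ℝ F z‖ := (measurable_fderiv ℝ F).norm
  set f1 : ℂ → ℝ≥0∞ := fun z =>
    ENNReal.ofReal (‖fderiv ℝ F z‖ ^ 2 * z.im ^ (2 * (p - 2) / p)) with hf1def
  set f2 : ℂ → ℝ≥0∞ := fun z => ENNReal.ofReal (z.im ^ ((4 - p) / p)) with hf2def
  have hf1 : Measurable f1 := by fun_prop
  have hf2 : Measurable f2 := by fun_prop
  have hpq : (p / 2).HolderConjugate (p / (p - 2)) := by
    refine ⟨?_, by positivity, by positivity⟩
    rw [inv_div, inv_div, inv_one, ← add_div, add_sub_cancel, div_self hp0.ne']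
  have hold := ENNReal.lintegral_mul_le_Lp_mul_Lq (volume.restrict Q) hpq
    hf1.aemeasurable hf2.aemeasurable
  rw [one_div_div, one_div_div] at hold
  -- first factor bound
  have hB1 : (∫⁻ z in Q, f1 z ^ (p / 2)) ≤ besovEnergy p F := by
    have heq : ∫⁻ z in Q, f1 z ^ (p / 2)
        = ∫⁻ z in Q, ENNReal.ofReal (‖fderiv ℝ F z‖ ^ p * z.im ^ (p - 2)) := by
      refine setLIntegral_congr_fun hQm (fun z hz => ?_)
      have hy : 0 < z.im := hz.2.1
      rw [hf1def]
      rw [ENNReal.ofReal_rpow_of_nonneg (by positivity) (by positivity)]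
      congr 1
      rw [Real.mul_rpow (by positivity) (by positivity),
        ← Real.rpow_natCast ‖fderiv ℝ F z‖ 2, ← Real.rpow_mul (norm_nonneg _),
        ← Real.rpow_mul hy.le]
      have h1 : ((2 : ℕ) : ℝ) * (p / 2) = p := by push_cast; ring
      have h2 : 2 * (p - 2) / p * (p / 2) = p - 2 := by field_simp
      rw [h1, h2]
    rw [heq, besovEnergy]
    exact lintegral_mono_set fun z hz => hz.2.1
  -- second factor computation
  have hB2 : (∫⁻ z in Q, f2 z ^ (p / (p - 2))) ^ ((p - 2) / p)
      = C * ENNReal.ofReal (b - a) := by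
    have hα : -1 < (4 - p) / (p - 2) := by
      rw [lt_div_iff₀ hp2]; linarith
    have heq : ∫⁻ z in Q, f2 z ^ (p / (p - 2))
        = ∫⁻ z in Q, ENNReal.ofReal (z.im ^ ((4 - p) / (p - 2))) := by
      refine setLIntegral_congr_fun hQm (fun z hz => ?_)
      have hy : 0 < z.im := hz.2.1
      rw [hf2def]
      rw [ENNReal.ofReal_rpow_of_nonneg (Real.rpow_nonneg hy.le _) (by positivity),
        ← Real.rpow_mul hy.le]
      congr 2
      field_simp
    rw [heq, hQdef, lintegral_carlesonBox_im a b
        (fun y => ENNReal.ofReal (y ^ ((4 - p) / (p - 2)))) (by fun_prop),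
      lintegral_Ioo_rpow hL hα]
    have hα1 : (4 - p) / (p - 2) + 1 = 2 / (p - 2) := by field_simp; norm_num
    have hval : (b - a) ^ ((4 - p) / (p - 2) + 1) / ((4 - p) / (p - 2) + 1)
        = (b - a) ^ (2 / (p - 2)) * ((p - 2) / 2) := by
      rw [hα1, div_eq_mul_inv, inv_div]
    rw [hval, ENNReal.ofReal_mul (by positivity),
      ← ENNReal.ofReal_rpow_of_pos hL,
      ENNReal.mul_rpow_of_nonneg _ _ (by positivity),
      ENNReal.mul_rpow_of_nonneg _ _ (by positivity),
      ← ENNReal.rpow_mul]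
    have h3 : 2 / (p - 2) * ((p - 2) / p) = 2 / p := by field_simp
    have h4 : ENNReal.ofReal (b - a) ^ ((p - 2) / p) * ENNReal.ofReal (b - a) ^ (2 / p)
        = ENNReal.ofReal (b - a) := by
      rw [← ENNReal.rpow_add _ _ (by simp [ENNReal.ofReal_eq_zero]; linarith)
        ENNReal.ofReal_ne_top]
      have : (p - 2) / p + 2 / p = 1 := by field_simp; ring
      rw [this, ENNReal.rpow_one]
    rw [h3, ← mul_assoc, h4, hCdef, mul_comm]
  calc ∫⁻ z in Q, ENNReal.ofReal (‖fderiv ℝ F z‖ ^ 2 * z.im)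
      = ∫⁻ z in Q, (f1 * f2) z := by
        refine setLIntegral_congr_fun hQm (fun z hz => ?_)
        have hy : 0 < z.im := hz.2.1
        show ENNReal.ofReal (‖fderiv ℝ F z‖ ^ 2 * z.im) = f1 z * f2 z
        rw [hf1def, hf2def, ← ENNReal.ofReal_mul (by positivity)]
        congr 1
        rw [mul_assoc, ← Real.rpow_add hy]
        have hsum : 2 * (p - 2) / p + (4 - p) / p = 1 := by field_simp; ring
        rw [hsum, Real.rpow_one]
    _ ≤ (∫⁻ z in Q, f1 z ^ (p / 2)) ^ (2 / p) * (∫⁻ z in Q, f2 z ^ (p / (p - 2))) ^ ((p - 2) / p) :=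
        hold
    _ ≤ besovEnergy p F ^ (2 / p) * (∫⁻ z in Q, f2 z ^ (p / (p - 2))) ^ ((p - 2) / p) :=
        mul_le_mul_left (ENNReal.rpow_le_rpow hB1 (by positivity)) _
    _ = besovEnergy p F ^ (2 / p) * (C * ENNReal.ofReal (b - a)) := by rw [hB2]
    _ = C * besovEnergy p F ^ (2 / p) * ENNReal.ofReal (b - a) := by ring
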